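/- arXiv:1412.2538 — 4 statements merged into one kernel-verified Lean document; each statement's English description precedes it below -/
import Mathlib

section
/- With S_K(λ) as defined by the structure constants b(i)·b(j) = Σ_{k=0}^{i} C(j+k,i) C(j+k,k) C(m+j+i,i-k) b(j+k) over a field of characteristic 2, the algebra S_K(λ) is commutative, i.e. b(i)·b(j) = b(j)·b(i) for all 0 ≤ i, j ≤ λ₂. -/
theorem SK_comm {K : Type*} [Field K] [CharP K 2]
    {S : Type*} [Ring S] [Algebra K S]
    (lam1 lam2 : ℕ) (hlam : lam2 ≤ lam1) (m : ℕ) (hm : m = lam1 - lam2)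
    (b : ℕ → S)
    (hindep : LinearIndependent K (fun i : Fin (lam2 + 1) => b i))
    (hspan : Submodule.span K (Set.range fun i : Fin (lam2 + 1) => b i) = ⊤)
    (hzero : ∀ a : ℕ, lam2 < a → b a = 0)
    (hmul : ∀ i j : ℕ, i ≤ lam2 → j ≤ lam2 →
      b i * b j = ∑ k ∈ Finset.range (i + 1),
        ((Nat.choose (j + k) i * Nat.choose (j + k) k *
          Nat.choose (m + j + i) (i - k) : ℕ) : K) • b (j + k)) :
    ∀ i j : ℕ, i ≤ lam2 → j ≤ lam2 → b i * b j = b j * b i := by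
  have key : ∀ i j : ℕ, i ≤ lam2 → j ≤ lam2 →
      b i * b j = ∑ t ∈ Finset.range (i + j + 1),
        ((Nat.choose t i * Nat.choose t j * Nat.choose (m + i + j) (i + j - t) : ℕ) : K) • b t := by
    intro i j hi hj
    rw [hmul i j hi hj]
    have hsub : Finset.Ico j (i + j + 1) ⊆ Finset.range (i + j + 1) := by
      intro t ht
      simp only [Finset.mem_Ico] at ht
      simp [ht.2]
    rw [← Finset.sum_subset hsub (by
      intro t ht hnt
      simp only [Finset.mem_range] at ht
      simp only [Finset.mem_Ico, not_and, not_lt] at hnt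
      have htj : t < j := by omega
      rw [Nat.choose_eq_zero_of_lt htj]
      simp)]
    rw [Finset.sum_Ico_eq_sum_range]
    have hrange : i + j + 1 - j = i + 1 := by omega
    rw [hrange]
    apply Finset.sum_congr rfl
    intro k hk
    simp only [Finset.mem_range] at hk
    have h1 : (j + k).choose j = (j + k).choose k := by
      rw [← Nat.choose_symm (Nat.le_add_right j k)]
      congr 1
      omega
    have h2 : i - k = i + j - (j + k) := by omega
    rw [h1, h2, show m + j + i = m + i + j from by omega]
  intro i j hi hj
  rw [key i j hi hj, key j i hj hi]
  apply Finset.sum_congr (by rw [Nat.add_comm j i])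
  intro t ht
  congr 1
  push_cast
  rw [show m + j + i = m + i + j from by omega, show j + i - t = i + j - t from by omega]
  ring
end

section
/- In S_K(λ) over a field of characteristic 2: if i has binary expansion i = Σ_t i_t 2^t with i_t ∈ {0,1}, then b(i) = ∏_{t : i_t = 1} b(2^t). -/
open Finset

/-- Vandermonde / Lucas mod 2: `(2^t + k).choose r ≡ k.choose r (mod 2)` when `r < 2^t`. -/
lemma choose_two_pow_add_zmod
    (t k r : ℕ) (hr : r < 2 ^ t) :
    (((2 ^ t + k).choose r : ZMod 2)) = (k.choose r : ZMod 2) := by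
  rw [Nat.add_choose_eq]
  push_cast
  rw [Finset.sum_eq_single ((0, r) : ℕ × ℕ)]
  · simp
  · rintro ⟨a, c⟩ hmem hne
    have hac : a + c = r := Finset.HasAntidiagonal.mem_antidiagonal.mp hmem
    have ha : a ≠ 0 := by
      rintro rfl
      exact hne (by simp [← hac])
    have hdvd : (2 : ℕ) ∣ (2 ^ t).choose a :=
      Nat.Prime.dvd_choose_pow Nat.prime_two ha (by omega)
    have : ((2 ^ t).choose a : ZMod 2) = 0 :=
      (ZMod.natCast_eq_zero_iff _ _).mpr hdvd
    simp [this]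
  · intro h
    exact absurd (Finset.HasAntidiagonal.mem_antidiagonal.mpr (by omega)) h

theorem b_prod_binary {K : Type*} [Field K] [CharP K 2]
    {S : Type*} [CommRing S] [Algebra K S]
    (lam1 lam2 : ℕ) (hlam : lam2 ≤ lam1) (m : ℕ) (hm : m = lam1 - lam2)
    (b : ℕ → S)
    (hindep : LinearIndependent K (fun i : Fin (lam2 + 1) => b i))
    (hspan : Submodule.span K (Set.range fun i : Fin (lam2 + 1) => b i) = ⊤)
    (hzero : ∀ a : ℕ, lam2 < a → b a = 0)
    (hmul : ∀ i j : ℕ, i ≤ lam2 → j ≤ lam2 →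
      b i * b j = ∑ k ∈ Finset.range (i + 1),
        ((Nat.choose (j + k) i * Nat.choose (j + k) k *
          Nat.choose (m + j + i) (i - k) : ℕ) : K) • b (j + k)) :
    ∀ i : ℕ, i ≤ lam2 →
      b i = ∏ t ∈ Finset.filter (fun t => i.testBit t) (Finset.range (i + 1)),
        b (2 ^ t) := by
  -- the cast ℕ → K factors through ZMod 2
  have hcast : ∀ n : ℕ, (n : K) = (ZMod.castHom (dvd_refl 2) K) (n : ZMod 2) :=
    fun n => (map_natCast _ n).symm
  -- b 0 is the identity
  have h1 : ∀ j : ℕ, j ≤ lam2 → b 0 * b j = b j := by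
    intro j hj
    have := hmul 0 j (Nat.zero_le _) hj
    simpa using this
  have h2 : ∀ s : S, b 0 * s = s := by
    intro s
    have hs : s ∈ Submodule.span K (Set.range fun i : Fin (lam2 + 1) => b i) := by
      rw [hspan]; exact Submodule.mem_top
    induction hs using Submodule.span_induction with
    | mem x hx =>
      obtain ⟨j, rfl⟩ := hx
      exact h1 j (by omega)
    | zero => simp
    | add x y _ _ hx hy => rw [mul_add, hx, hy]
    | smul c x _ hx => rw [mul_smul_comm, hx]
  have hb0 : b 0 = 1 := by
    have := h2 1
    simpa using this
  intro i
  induction i using Nat.strong_induction_on with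
  | _ i ih =>
    intro hi
    rcases Nat.eq_zero_or_pos i with rfl | hpos
    · simpa [Nat.zero_testBit] using hb0
    · set t := Nat.log 2 i with ht
      have h2t : 2 ^ t ≤ i := Nat.pow_log_le_self 2 hpos.ne'
      have hlt : i < 2 ^ (t + 1) := Nat.lt_pow_succ_log_self (by norm_num) i
      set r := i - 2 ^ t with hrdef
      have hir : i = 2 ^ t + r := by omega
      have hr2 : r < 2 ^ t := by
        rw [pow_succ] at hlt; omega
      have h2tpos : 0 < 2 ^ t := Nat.pow_pos (by norm_num)
      have hri : r < i := by omega
      -- the key multiplication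
      have key : b r * b (2 ^ t) = b i := by
        rw [hmul r (2 ^ t) (by omega) (by omega), Finset.sum_range_succ]
        have hz : ∀ k ∈ Finset.range r,
            ((Nat.choose (2 ^ t + k) r * Nat.choose (2 ^ t + k) k *
              Nat.choose (m + 2 ^ t + r) (r - k) : ℕ) : K) • b (2 ^ t + k) = 0 := by
          intro k hk
          have hkr : k < r := Finset.mem_range.mp hk
          have hc : ((Nat.choose (2 ^ t + k) r : ℕ) : ZMod 2) = 0 := by
            rw [choose_two_pow_add_zmod t k r hr2, Nat.choose_eq_zero_of_lt hkr]
            simp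
          have : ((Nat.choose (2 ^ t + k) r * Nat.choose (2 ^ t + k) k *
              Nat.choose (m + 2 ^ t + r) (r - k) : ℕ) : K) = 0 := by
            rw [hcast]
            push_cast
            rw [hc]
            simp
          rw [this, zero_smul]
        rw [Finset.sum_eq_zero hz, zero_add]
        have hone : ((Nat.choose (2 ^ t + r) r * Nat.choose (2 ^ t + r) r *
            Nat.choose (m + 2 ^ t + r) (r - r) : ℕ) : K) = 1 := by
          rw [hcast]
          push_cast
          rw [choose_two_pow_add_zmod t r r hr2]
          simp
        rw [Nat.sub_self] at hone ⊢
        rw [hone, one_smul, ← hir]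
      -- Finset identity
      have hfs : Finset.filter (fun s => i.testBit s) (Finset.range (i + 1)) =
          insert t (Finset.filter (fun s => r.testBit s) (Finset.range (r + 1))) := by
        ext s
        simp only [Finset.mem_filter, Finset.mem_range, Finset.mem_insert]
        constructor
        · rintro ⟨hsi, hbit⟩
          rcases lt_trichotomy s t with hst | rfl | hst
          · right
            have hbit' : r.testBit s = true := by
              rw [hir, Nat.testBit_two_pow_add_gt hst] at hbit
              exact hbit
            have h2s : 2 ^ s ≤ r := by
              by_contra h
              rw [Nat.testBit_lt_two_pow (by omega)] at hbit'
              exact Bool.false_ne_true hbit'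
            have : s < 2 ^ s := Nat.lt_two_pow_self (n := s)
            exact ⟨by omega, hbit'⟩
          · left; rfl
          · exfalso
            have : i < 2 ^ s := lt_of_lt_of_le hlt (Nat.pow_le_pow_right (by norm_num) (by omega))
            rw [Nat.testBit_lt_two_pow this] at hbit
            exact Bool.false_ne_true hbit
        · rintro (rfl | ⟨hsr, hbit⟩)
          · have htlt : t < 2 ^ t := Nat.lt_two_pow_self (n := t)
            refine ⟨by omega, ?_⟩
            rw [hir, Nat.testBit_two_pow_add_eq, Nat.testBit_lt_two_pow hr2]
            rfl
          · have h2s : 2 ^ s ≤ r := by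
              by_contra h
              rw [Nat.testBit_lt_two_pow (by omega)] at hbit
              exact Bool.false_ne_true hbit
            have hst : s < t := by
              by_contra h
              have : 2 ^ t ≤ 2 ^ s := Nat.pow_le_pow_right (by norm_num) (by omega)
              omega
            refine ⟨by omega, ?_⟩
            rw [hir, Nat.testBit_two_pow_add_gt hst]
            exact hbit
      have htnotmem : t ∉ Finset.filter (fun s => r.testBit s) (Finset.range (r + 1)) := by
        simp only [Finset.mem_filter]
        rintro ⟨-, hbit⟩
        rw [Nat.testBit_lt_two_pow hr2] at hbit
        exact Bool.false_ne_true hbit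
      rw [hfs, Finset.prod_insert htnotmem, ← ih r hri (by omega), ← key, mul_comm]
end

section
/- S_K(λ) is generated as a K-algebra by the elements b(2^0), b(2^1), …, b(2^t), where t is the unique natural number with 2^{t-1} < λ₂ ≤ 2^t. -/
lemma aux_odd_choose : ∀ s r : ℕ, r < 2 ^ s → Nat.choose (2 ^ s + r) r % 2 = 1 := by
  haveI : Fact (Nat.Prime 2) := ⟨Nat.prime_two⟩
  intro s
  induction s with
  | zero =>
    intro r hr
    interval_cases r
    rfl
  | succ s ih =>
    intro r hr
    have hp : 2 ^ (s + 1) = 2 * 2 ^ s := by rw [pow_succ]; ring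
    have h := @Choose.choose_modEq_choose_mod_mul_choose_div_nat (2 ^ (s + 1) + r) r 2 _
    have h1 : (2 ^ (s + 1) + r) % 2 = r % 2 := by omega
    have h2 : (2 ^ (s + 1) + r) / 2 = 2 ^ s + r / 2 := by omega
    rw [h1, h2, Nat.choose_self, one_mul] at h
    have := ih (r / 2) (by omega)
    unfold Nat.ModEq at h
    omega

theorem SK_generated {K : Type*} [Field K] [CharP K 2]
    {S : Type*} [CommRing S] [Algebra K S]
    (lam1 lam2 : ℕ) (hlam : lam2 ≤ lam1) (m : ℕ) (hm : m = lam1 - lam2)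
    (b : ℕ → S)
    (hindep : LinearIndependent K (fun i : Fin (lam2 + 1) => b i))
    (hspan : Submodule.span K (Set.range fun i : Fin (lam2 + 1) => b i) = ⊤)
    (hzero : ∀ a : ℕ, lam2 < a → b a = 0)
    (hmul : ∀ i j : ℕ, i ≤ lam2 → j ≤ lam2 →
      b i * b j = ∑ k ∈ Finset.range (i + 1),
        ((Nat.choose (j + k) i * Nat.choose (j + k) k *
          Nat.choose (m + j + i) (i - k) : ℕ) : K) • b (j + k)) :
    ∀ t : ℕ, 1 ≤ lam2 → lam2 ≤ 2 ^ t → (∀ s : ℕ, lam2 ≤ 2 ^ s → t ≤ s) →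
      Algebra.adjoin K ((fun s : ℕ => b (2 ^ s)) '' {s | s ≤ t}) = ⊤ := by
  intro t hlam2 hle _
  set A := Algebra.adjoin K ((fun s : ℕ => b (2 ^ s)) '' {s | s ≤ t}) with hA
  -- b 0 is the identity
  have hb0 : ∀ j : ℕ, j ≤ lam2 → b 0 * b j = b j := by
    intro j hj
    rw [hmul 0 j (by omega) hj]
    simp
  have hone : b 0 = 1 := by
    have h1 : (1 : S) ∈ Submodule.span K (Set.range fun i : Fin (lam2 + 1) => b i) := by
      rw [hspan]; trivial
    have key : b 0 * (1 : S) = 1 := by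
      refine Submodule.span_induction ?_ ?_ ?_ ?_ h1
      · rintro x ⟨i, rfl⟩; exact hb0 i (by omega)
      · simp
      · intro x y _ _ hx hy; rw [mul_add, hx, hy]
      · intro c x _ hx; rw [mul_smul_comm, hx]
    simpa using key
  have hmem : ∀ n : ℕ, n ≤ lam2 → b n ∈ A := by
    intro n
    induction n using Nat.strong_induction_on with
    | _ n ih =>
      intro hn
      rcases Nat.eq_zero_or_pos n with rfl | hpos
      · rw [hone]; exact one_mem A
      · set s := Nat.log 2 n with hs
        have hs1 : 2 ^ s ≤ n := Nat.pow_log_le_self 2 (by omega)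
        have hs2 : n < 2 ^ (s + 1) := Nat.lt_pow_succ_log_self (by norm_num) n
        have hrn : n - 2 ^ s < 2 ^ s := by
          have : 2 ^ (s + 1) = 2 * 2 ^ s := by rw [pow_succ]; ring
          omega
        have hst : s ≤ t := by
          have h2 : 2 ^ s ≤ 2 ^ t := le_trans hs1 (le_trans hn hle)
          exact (Nat.pow_le_pow_iff_right (by norm_num)).mp h2
        have hps : b (2 ^ s) ∈ A :=
          Algebra.subset_adjoin ⟨s, hst, rfl⟩
        set r := n - 2 ^ s with hr
        rcases Nat.eq_zero_or_pos r with hr0 | hrpos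
        · have hn2 : n = 2 ^ s := by omega
          rw [hn2]; exact hps
        · have hrlt : r < n := by
            have : 0 < 2 ^ s := Nat.pow_pos (by norm_num)
            omega
          have hmul' := hmul r (2 ^ s) (by omega) (by omega)
          rw [Finset.sum_range_succ] at hmul'
          have hcoef : ((Nat.choose (2 ^ s + r) r * Nat.choose (2 ^ s + r) r *
              Nat.choose (m + 2 ^ s + r) (r - r) : ℕ) : K) = 1 := by
            have hodd := aux_odd_choose s r hrn
            obtain ⟨q, hq⟩ : ∃ q, Nat.choose (2 ^ s + r) r = 2 * q + 1 :=
              ⟨Nat.choose (2 ^ s + r) r / 2, by omega⟩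
            rw [Nat.sub_self, Nat.choose_zero_right, mul_one, hq]
            push_cast
            have h2 : ((2 : ℕ) : K) = 0 := CharP.cast_eq_zero K 2
            push_cast at h2
            rw [h2]
            ring
          rw [hcoef, one_smul] at hmul'
          have hbn : b (2 ^ s + r) = b r * b (2 ^ s) -
              ∑ k ∈ Finset.range r, ((Nat.choose (2 ^ s + k) r * Nat.choose (2 ^ s + k) k *
                Nat.choose (m + 2 ^ s + r) (r - k) : ℕ) : K) • b (2 ^ s + k) := by
            rw [hmul']; ring
          have hn2 : n = 2 ^ s + r := by omega
          rw [hn2, hbn]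
          refine sub_mem (mul_mem (ih r hrlt (by omega)) hps) (sum_mem ?_)
          intro k hk
          rw [Finset.mem_range] at hk
          exact Subalgebra.smul_mem A (ih (2 ^ s + k) (by omega) (by omega)) _
  have hle' : Submodule.span K (Set.range fun i : Fin (lam2 + 1) => b i) ≤
      Subalgebra.toSubmodule A := by
    rw [Submodule.span_le]
    rintro x ⟨i, rfl⟩
    exact hmem i (by omega)
  rw [hspan] at hle'
  have : Subalgebra.toSubmodule A = ⊤ := top_le_iff.mp hle'
  rwa [Algebra.toSubmodule_eq_top] at this
end

section
/- In S_K(λ) over a field of characteristic 2 (with λ = (t-1, t-1), so m = 0), the identity element b(0) cannot be written as a product of two nontrivial orthogonal idempotents; equivalently, for m = 0 the only g ≥ 0 with 0 ≤ g ≤ λ₂ and C(2g, g) odd is g = 0, so the identity is the unique primitive idempotent and S_K(λ) is local. -/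
lemma central_even_aux {g : ℕ} (hg : 1 ≤ g) : 2 ∣ Nat.choose (2 * g) g := by
  obtain ⟨m, rfl⟩ : ∃ m, g = m + 1 := ⟨g - 1, by omega⟩
  have h2 : 2 * (m + 1) = (2 * m + 1) + 1 := by ring
  rw [h2, Nat.choose_succ_succ, Nat.choose_symm_half]
  exact ⟨Nat.choose (2 * m + 1) m, (two_mul _).symm⟩

lemma key_even_aux (i j : ℕ) (hi : 1 ≤ i) : 2 ∣ Nat.choose j i * Nat.choose (j + i) i := by
  rcases le_or_gt i j with h | h
  · have hm := Nat.choose_mul (n := j + i) (k := 2 * i) (s := i) (by omega)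
    have h1 : j + i - i = j := by omega
    have h2 : 2 * i - i = i := by omega
    rw [h1, h2] at hm
    have : Nat.choose j i * Nat.choose (j + i) i =
        Nat.choose (j + i) (2 * i) * Nat.choose (2 * i) i := by
      rw [hm]; ring
    rw [this]
    exact (central_even_aux hi).mul_left _
  · simp [Nat.choose_eq_zero_of_lt h]

theorem SK_m_zero_local {K : Type*} [Field K] [CharP K 2]
    {S : Type*} [CommRing S] [Algebra K S]
    (t : ℕ) (ht : 1 ≤ t) (lam2 : ℕ) (hlam2 : lam2 = t - 1)
    (b : ℕ → S)
    (hindep : LinearIndependent K (fun i : Fin (lam2 + 1) => b i))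
    (hspan : Submodule.span K (Set.range fun i : Fin (lam2 + 1) => b i) = ⊤)
    (hzero : ∀ a : ℕ, lam2 < a → b a = 0)
    (hone : b 0 = 1)
    (hmul : ∀ i j : ℕ, i ≤ lam2 → j ≤ lam2 →
      b i * b j = ∑ k ∈ Finset.range (i + 1),
        ((Nat.choose (j + k) i * Nat.choose (j + k) k *
          Nat.choose (j + i) (i - k) : ℕ) : K) • b (j + k)) :
    (¬ ∃ e f : S, IsIdempotentElem e ∧ IsIdempotentElem f ∧ e * f = 0 ∧
        e ≠ 0 ∧ f ≠ 0 ∧ e + f = 1) ∧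
    (∀ g : ℕ, g ≤ lam2 → Odd (Nat.choose (2 * g) g) → g = 0) ∧
    IsLocalRing S := by
  -- Nontriviality
  have hb0 : b 0 ≠ 0 := by
    have := hindep.ne_zero ⟨0, Nat.succ_pos _⟩
    simpa using this
  have hnt : Nontrivial S := nontrivial_of_ne 1 0 (hone ▸ hb0)
  -- The filtration
  set N : ℕ → Submodule K S :=
    fun r => Submodule.span K {x | ∃ a, r ≤ a ∧ x = b a} with hN
  have hmem : ∀ a r : ℕ, r ≤ a → b a ∈ N r := fun a r hra =>
    Submodule.subset_span ⟨a, hra, rfl⟩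
  have hanti : ∀ r s : ℕ, r ≤ s → N s ≤ N r := by
    intro r s hrs
    apply Submodule.span_mono
    rintro x ⟨a, ha, rfl⟩
    exact ⟨a, le_trans hrs ha, rfl⟩
  have hbot : N (lam2 + 1) = ⊥ := by
    rw [hN, Submodule.span_eq_bot]
    rintro x ⟨a, ha, rfl⟩
    exact hzero a (by omega)
  -- products of generators
  have hNmul : ∀ i j : ℕ, 1 ≤ i → 1 ≤ j → b i * b j ∈ N (j + 1) := by
    intro i j hi hj
    rcases lt_or_ge lam2 i with hli | hli
    · rw [hzero i hli, zero_mul]; exact Submodule.zero_mem _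
    rcases lt_or_ge lam2 j with hlj | hlj
    · rw [hzero j hlj, mul_zero]; exact Submodule.zero_mem _
    rw [hmul i j hli hlj]
    apply Submodule.sum_mem
    intro k hk
    rcases Nat.eq_zero_or_pos k with rfl | hk1
    · have hcoef : ((Nat.choose (j + 0) i * Nat.choose (j + 0) 0 *
          Nat.choose (j + i) (i - 0) : ℕ) : K) = 0 := by
        have hdvd : (2 : ℕ) ∣ Nat.choose (j + 0) i * Nat.choose (j + 0) 0 *
            Nat.choose (j + i) (i - 0) := by
          simpa [Nat.add_zero, Nat.choose_zero_right, Nat.sub_zero, mul_one]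
            using key_even_aux i j hi
        exact (CharP.cast_eq_zero_iff K 2 _).mpr hdvd
      rw [hcoef, zero_smul]
      exact Submodule.zero_mem _
    · exact Submodule.smul_mem _ _ (hmem (j + k) (j + 1) (by omega))
  -- products of filtration pieces
  have hmul_le : ∀ r : ℕ, 1 ≤ r → N r * N r ≤ N (r + 1) := by
    intro r hr
    rw [hN, Submodule.span_mul_span, Submodule.span_le]
    rintro x ⟨u, ⟨a, ha, rfl⟩, v, ⟨c, hc, rfl⟩, rfl⟩
    exact hanti (r + 1) (c + 1) (by omega) (hNmul a c (by omega) (by omega))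
  have hsq : ∀ r : ℕ, 1 ≤ r → ∀ x ∈ N r, x ^ 2 ∈ N (r + 1) := by
    intro r hr x hx
    rw [pow_two]
    exact hmul_le r hr (Submodule.mul_mem_mul hx hx)
  have hpow : ∀ n : ℕ, ∀ x ∈ N 1, x ^ (2 ^ n) ∈ N (n + 1) := by
    intro n
    induction n with
    | zero => intro x hx; simpa using hx
    | succ n ih =>
      intro x hx
      have : x ^ (2 ^ (n + 1)) = (x ^ (2 ^ n)) ^ 2 := by
        rw [← pow_mul, pow_succ]
      rw [this]
      exact hsq (n + 1) (by omega) _ (ih x hx)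
  have hnil : ∀ x ∈ N 1, IsNilpotent x := by
    intro x hx
    refine ⟨2 ^ lam2, ?_⟩
    have := hpow lam2 x hx
    rw [hbot] at this
    simpa using this
  -- decomposition of arbitrary elements
  have hdecomp : ∀ x : S, ∃ c : K, x - c • 1 ∈ N 1 := by
    intro x
    have hx : x ∈ Submodule.span K (Set.range fun i : Fin (lam2 + 1) => b i) := by
      rw [hspan]; exact Submodule.mem_top
    rw [Submodule.mem_span_range_iff_exists_fun] at hx
    obtain ⟨c, hc⟩ := hx
    refine ⟨c 0, ?_⟩
    have hsum : x = c 0 • b 0 + ∑ i : Fin lam2, c i.succ • b i.succ := by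
      rw [← hc, Fin.sum_univ_succ]
      rfl
    have : x - c 0 • 1 = ∑ i : Fin lam2, c i.succ • b i.succ := by
      rw [hsum, hone]; ring
    rw [this]
    apply Submodule.sum_mem
    intro i _
    exact Submodule.smul_mem _ _ (hmem _ 1 (by simp [Fin.val_succ]))
  -- locality
  have hlocal : IsLocalRing S := by
    apply IsLocalRing.of_isUnit_or_isUnit_one_sub_self
    intro a
    obtain ⟨c, hc⟩ := hdecomp a
    by_cases hc0 : c = 0
    · right
      have ha : a ∈ N 1 := by simpa [hc0] using hc
      exact (hnil a ha).isUnit_one_sub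
    · left
      have hu : IsUnit ((c • 1 : S)) := by
        apply IsUnit.of_mul_eq_one (c⁻¹ • 1)
        rw [smul_mul_smul_comm, mul_one, mul_inv_cancel₀ hc0, one_smul]
      have := (hnil _ hc).isUnit_add_left_of_commute hu (Commute.all _ _)
      simpa using this
  refine ⟨?_, ?_, hlocal⟩
  · rintro ⟨e, f, he, hf, hef, hne, hnf, hsum⟩
    rcases IsLocalRing.isUnit_or_isUnit_of_add_one hsum with hu | hu
    · exact hnf (hu.mul_left_cancel (by rw [hef, mul_zero]))
    · exact hne (hu.mul_left_cancel (by rw [mul_comm, hef, mul_zero]))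
  · intro g hg hodd
    by_contra hne
    have := central_even_aux (g := g) (by omega)
    rw [Nat.odd_iff] at hodd
    omega
end
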